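/- arXiv:1002.2388 — 2 statements merged into one kernel-verified Lean document; each statement's English description precedes it below -/
import Mathlib

section
/- For the ideal I = (X_1, X_2)D of D, both (I²)^∗ = M² and (I³)^∗ = M², where E^∗ := ⋂{J ∈ 𝒥 : E ⊆ J}. -/
open MvPolynomial FractionalIdeal

noncomputable section

variable (k : Type*) [Field k]

/-- The ideal `N = (X_1, X_2, ...)` of `R = k[X_1, X_2, ...]` generated by all the
indeterminates. -/
def bigN : Ideal (MvPolynomial ℕ k) := Ideal.span (Set.range MvPolynomial.X)

theorem bigN_eq_ker : bigN k = RingHom.ker (constantCoeff (σ := ℕ) (R := k)) := by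
  ext p
  rw [bigN, ← Set.image_univ, mem_ideal_span_X_image, RingHom.mem_ker]
  constructor
  · intro h
    rw [constantCoeff_eq]
    by_contra hc
    obtain ⟨i, _, hi⟩ := h 0 (mem_support_iff.mpr hc)
    simp at hi
  · intro h m hm
    rw [constantCoeff_eq] at h
    have hm0 : m ≠ 0 := by rintro rfl; exact mem_support_iff.mp hm h
    obtain ⟨i, hi⟩ := Finsupp.ne_iff.mp hm0
    exact ⟨i, trivial, by simpa using hi⟩

instance : (bigN k).IsMaximal := by
  rw [bigN_eq_ker]
  exact RingHom.ker_isMaximal_of_surjective _ (fun a => ⟨C a, by simp⟩)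

/-- `D`, the localization of `k[X_1, X_2, ...]` at the maximal ideal `N`. -/
abbrev bigD := Localization.AtPrime (bigN k)

/-- `K`, the fraction field of `D`. -/
abbrev bigK := FractionRing (bigD k)

/-- `M`, the maximal ideal of the local domain `D`. -/
def bigM : Ideal (bigD k) := IsLocalRing.maximalIdeal (bigD k)

/-- The maximal ideal `M` of `D`, viewed as a fractional ideal of `D`. -/
def bigMF : FractionalIdeal (nonZeroDivisors (bigD k)) (bigK k) :=
  ((bigM k : Ideal (bigD k)) : FractionalIdeal (nonZeroDivisors (bigD k)) (bigK k))

attribute [local instance high] Algebra.toModule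

/-- The set `𝒥` of all fractional ideals of `D` of the form `xD`, `yM` or `zM²`, with
`x, y, z` nonzero elements of `K` (viewed as `D`-submodules of `K`). -/
def Jset : Set (Submodule (bigD k) (bigK k)) :=
  {J | ∃ x : bigK k, x ≠ 0 ∧
    (J = Submodule.span (bigD k) {x} ∨
     J = Submodule.span (bigD k) {x} * (bigMF k : Submodule (bigD k) (bigK k)) ∨
     J = Submodule.span (bigD k) {x} * (bigMF k : Submodule (bigD k) (bigK k)) ^ 2)}

/-- The operation `E^∗ := ⋂ {J ∈ 𝒥 : E ⊆ J}`. -/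
def starJ (E : Submodule (bigD k) (bigK k)) : Submodule (bigD k) (bigK k) :=
  sInf {J | J ∈ Jset k ∧ E ≤ J}

theorem bigK_algebraMap_apply (x : MvPolynomial ℕ k) :
    algebraMap (bigD k) (bigK k) (algebraMap (MvPolynomial ℕ k) (bigD k) x)
      = algebraMap (MvPolynomial ℕ k) (bigK k) x := by
  rw [RingHom.algebraMap_toAlgebra]
  rw [IsLocalization.lift_eq]

instance bigK_isScalarTower : @IsScalarTower (MvPolynomial ℕ k) (bigD k) (bigK k) Algebra.toSMul Algebra.toSMul
    Algebra.toSMul :=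
  IsScalarTower.of_algebraMap_eq (fun x => (bigK_algebraMap_apply k x).symm)

theorem bigK_algebra_eq : instAlgebraAtPrimeFractionRing (bigD k) = 
    (OreLocalization.instAlgebra : Algebra (bigD k) (bigK k)) := by
  apply Algebra.algebra_ext
  intro r
  revert r
  rw [← RingHom.ext_iff]
  refine IsLocalization.ringHom_ext (bigN k).primeCompl ?_
  refine RingHom.ext fun x => ?_
  exact (bigK_algebraMap_apply k x).trans (@IsScalarTower.algebraMap_apply (MvPolynomial ℕ k) (bigD k) (bigK k) _ _ _ _ OreLocalization.instAlgebra _ inferInstance x)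
  
instance : IsFractionRing (bigD k) (bigK k) := by
  have h : @IsFractionRing (bigD k) _ (bigK k) _ OreLocalization.instAlgebra := Localization.isLocalization
  rw [← bigK_algebra_eq] at h
  exact h



lemma prime_X' (i : ℕ) : Prime (X i : MvPolynomial ℕ k) := by
  let e0 : ℕ ≃ Option ℕ := (Denumerable.eqv (Option ℕ)).symm
  let e : ℕ ≃ Option ℕ := e0.trans (Equiv.swap (e0 i) none)
  have he : e i = none := by simp [e, Equiv.swap_apply_left]
  let φ := ((renameEquiv k e).trans (optionEquivLeft k ℕ)).toRingEquiv.toMulEquiv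
  rw [← MulEquiv.prime_iff φ]
  have : φ (X i) = Polynomial.X := by
    show (optionEquivLeft k ℕ) ((renameEquiv k e) (X i)) = Polynomial.X
    rw [renameEquiv_apply, rename_X, he, optionEquivLeft_X_none]
  rw [this]
  exact Polynomial.prime_X

lemma X_one_not_dvd_X_two : ¬ (X 1 : MvPolynomial ℕ k) ∣ X 2 := by
  rintro ⟨c, hc⟩
  have := congrArg (aeval (fun j : ℕ => if j = 1 then 0 else X j) :
    MvPolynomial ℕ k →ₐ[k] MvPolynomial ℕ k) hc
  rw [_root_.map_mul, aeval_X, aeval_X, if_pos rfl, if_neg (by norm_num), zero_mul] at this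
  exact X_ne_zero 2 this

lemma exists_prime_factor {g : MvPolynomial ℕ k} (hgN : g ∈ bigN k) (hg0 : g ≠ 0) :
    ∃ p : MvPolynomial ℕ k, Prime p ∧ p ∈ bigN k ∧ p ∣ g := by
  revert hgN hg0
  refine UniqueFactorizationMonoid.induction_on_prime g ?_ ?_ ?_
  · intro _ h; exact absurd rfl h
  · intro x hx hmem _
    exact absurd ((bigN k).eq_top_of_isUnit_mem hmem hx)
      (Ideal.IsMaximal.ne_top inferInstance)
  · intro a p ha hp IH hmem _
    by_cases hpN : p ∈ bigN k
    · exact ⟨p, hp, hpN, dvd_mul_right _ _⟩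
    · have haN : a ∈ bigN k := by
        rcases (Ideal.IsMaximal.isPrime inferInstance).mem_or_mem hmem with h | h
        · exact absurd h hpN
        · exact h
      obtain ⟨q, hq, hqN, hqa⟩ := IH haN ha
      exact ⟨q, hq, hqN, hqa.mul_left p⟩

lemma bigK_isFractionRing : IsFractionRing (MvPolynomial ℕ k) (bigK k) :=
  IsLocalization.isLocalization_of_algEquiv (nonZeroDivisors (MvPolynomial ℕ k))
    ((IsLocalization.algEquiv (nonZeroDivisors (bigD k))
      (FractionRing (MvPolynomial ℕ k)) (bigK k)).restrictScalars (MvPolynomial ℕ k))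

lemma key_inv_mem (v : bigK k) (n : ℕ)
    (h1 : ∃ a : bigD k, algebraMap (bigD k) (bigK k) a
        = v * algebraMap (MvPolynomial ℕ k) (bigK k) (X 1 ^ n))
    (h2 : ∃ a : bigD k, algebraMap (bigD k) (bigK k) a
        = v * algebraMap (MvPolynomial ℕ k) (bigK k) (X 2 ^ n)) :
    ∃ c : bigD k, algebraMap (bigD k) (bigK k) c = v := by
  haveI := bigK_isFractionRing k
  obtain ⟨f, g, hred, hv⟩ :=
    IsFractionRing.exists_reduced_fraction (MvPolynomial ℕ k) (K := bigK k) v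
  have hgK : algebraMap (MvPolynomial ℕ k) (bigK k) (g : MvPolynomial ℕ k) ≠ 0 :=
    IsFractionRing.to_map_ne_zero_of_mem_nonZeroDivisors g.2
  have hvg : v * algebraMap (MvPolynomial ℕ k) (bigK k) (g : MvPolynomial ℕ k)
      = algebraMap (MvPolynomial ℕ k) (bigK k) f := by
    rw [← hv, IsLocalization.mk'_spec]
  have step : ∀ i : ℕ, (∃ a : bigD k, algebraMap (bigD k) (bigK k) a
      = v * algebraMap (MvPolynomial ℕ k) (bigK k) (X i ^ n)) →
      ∀ p : MvPolynomial ℕ k, Prime p → p ∈ bigN k → p ∣ (g : MvPolynomial ℕ k) →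
        p ∣ X i ^ n := by
    rintro i ⟨a, ha⟩ p hp hpN hpg
    obtain ⟨⟨r, s⟩, e⟩ := IsLocalization.surj (bigN k).primeCompl a
    have eK : v * algebraMap (MvPolynomial ℕ k) (bigK k) (X i ^ n)
        * algebraMap (MvPolynomial ℕ k) (bigK k) (s : MvPolynomial ℕ k)
        = algebraMap (MvPolynomial ℕ k) (bigK k) r := by
      have := congrArg (algebraMap (bigD k) (bigK k)) e
      rw [_root_.map_mul, ha, ← IsScalarTower.algebraMap_apply,
        ← IsScalarTower.algebraMap_apply] at this
      exact this
    have hKeq : algebraMap (MvPolynomial ℕ k) (bigK k) (f * (X i ^ n * (s : MvPolynomial ℕ k)))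
        = algebraMap (MvPolynomial ℕ k) (bigK k) (r * (g : MvPolynomial ℕ k)) := by
      rw [_root_.map_mul, _root_.map_mul, _root_.map_mul, ← hvg, ← eK]; ring
    have hR : f * (X i ^ n * (s : MvPolynomial ℕ k)) = r * (g : MvPolynomial ℕ k) :=
      IsFractionRing.injective (MvPolynomial ℕ k) (bigK k) hKeq
    have hdvd : p ∣ f * (X i ^ n * (s : MvPolynomial ℕ k)) :=
      hR ▸ (Dvd.dvd.mul_left hpg r)
    rcases hp.2.2 _ _ hdvd with hf | hXs
    · exact absurd (hred hf hpg) hp.not_unit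
    · rcases hp.2.2 _ _ hXs with hX | hs
      · exact hX
      · exfalso
        obtain ⟨t, ht⟩ := hs
        exact s.2 (ht ▸ Ideal.mul_mem_right t _ hpN)
  by_cases hgN : (g : MvPolynomial ℕ k) ∈ bigN k
  · exfalso
    have hg0 : (g : MvPolynomial ℕ k) ≠ 0 := nonZeroDivisors.ne_zero g.2
    obtain ⟨p, hp, hpN, hpg⟩ := exists_prime_factor k hgN hg0
    have d1 : p ∣ X 1 := hp.dvd_of_dvd_pow (step 1 h1 p hp hpN hpg)
    have d2 : p ∣ X 2 := hp.dvd_of_dvd_pow (step 2 h2 p hp hpN hpg)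
    have a1 : Associated p (X 1) :=
      hp.irreducible.associated_of_dvd (prime_X' k 1).irreducible d1
    have a2 : Associated p (X 2) :=
      hp.irreducible.associated_of_dvd (prime_X' k 2).irreducible d2
    exact X_one_not_dvd_X_two k (a1.symm.trans a2).dvd
  · refine ⟨IsLocalization.mk' (bigD k) f (⟨(g : MvPolynomial ℕ k), hgN⟩ : (bigN k).primeCompl), ?_⟩
    have h1' : algebraMap (bigD k) (bigK k)
        (IsLocalization.mk' (bigD k) f (⟨(g : MvPolynomial ℕ k), hgN⟩ : (bigN k).primeCompl))
        * algebraMap (MvPolynomial ℕ k) (bigK k) (g : MvPolynomial ℕ k)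
        = algebraMap (MvPolynomial ℕ k) (bigK k) f := by
      rw [IsScalarTower.algebraMap_apply (MvPolynomial ℕ k) (bigD k) (bigK k),
        IsScalarTower.algebraMap_apply (MvPolynomial ℕ k) (bigD k) (bigK k),
        ← _root_.map_mul, IsLocalization.mk'_spec]
    exact mul_right_cancel₀ hgK (h1'.trans hvg.symm)

def bigI : Ideal (bigD k) := Ideal.span {algebraMap (MvPolynomial ℕ k) (bigD k) (X 1),
  algebraMap (MvPolynomial ℕ k) (bigD k) (X 2)}

lemma coeSub_le_one (E : Ideal (bigD k)) :
    IsLocalization.coeSubmodule (bigK k) E ≤ (1 : Submodule (bigD k) (bigK k)) := by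
  intro e he
  obtain ⟨m, _, rfl⟩ := (IsLocalization.mem_coeSubmodule _ _).mp he
  rw [Submodule.one_eq_range]
  exact ⟨m, rfl⟩

set_option maxHeartbeats 1000000 in
lemma M2_le_aux (n : ℕ) (x : bigK k) (hx : x ≠ 0) (P : Submodule (bigD k) (bigK k))
    (hP1 : P ≤ 1)
    (hMP : IsLocalization.coeSubmodule (bigK k) (bigM k ^ 2) ≤ P)
    (hIn : IsLocalization.coeSubmodule (bigK k) (bigI k ^ n)
      ≤ Submodule.span (bigD k) {x} * P) :
    IsLocalization.coeSubmodule (bigK k) (bigM k ^ 2)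
      ≤ Submodule.span (bigD k) {x} * P := by
  have hsub : Submodule.span (bigD k) {x} * P ≤ Submodule.span (bigD k) {x} := by
    have := mul_le_mul' (le_refl (Submodule.span (bigD k) {x})) hP1
    rwa [mul_one] at this
  have hXmem : ∀ i : ℕ, algebraMap (MvPolynomial ℕ k) (bigD k) (X i) ∈ bigI k →
      ∃ a : bigD k, algebraMap (bigD k) (bigK k) a
        = x⁻¹ * algebraMap (MvPolynomial ℕ k) (bigK k) (X i ^ n) := by
    intro i hXI
    have hmemc : algebraMap (bigD k) (bigK k)
        (algebraMap (MvPolynomial ℕ k) (bigD k) (X i) ^ n)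
        ∈ IsLocalization.coeSubmodule (bigK k) (bigI k ^ n) :=
      (IsLocalization.mem_coeSubmodule _ _).mpr ⟨_, Ideal.pow_mem_pow hXI n, rfl⟩
    have hmem := hsub (hIn hmemc)
    rw [Submodule.mem_span_singleton] at hmem
    obtain ⟨a, ha⟩ := hmem
    refine ⟨a, ?_⟩
    rw [Algebra.smul_def] at ha
    have hK : algebraMap (bigD k) (bigK k)
        (algebraMap (MvPolynomial ℕ k) (bigD k) (X i) ^ n)
        = algebraMap (MvPolynomial ℕ k) (bigK k) (X i ^ n) := by
      rw [map_pow, map_pow, bigK_algebraMap_apply]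
    rw [← hK, ← ha]
    field_simp
  have hX1 : algebraMap (MvPolynomial ℕ k) (bigD k) (X 1) ∈ bigI k :=
    Ideal.subset_span (Set.mem_insert _ _)
  have hX2 : algebraMap (MvPolynomial ℕ k) (bigD k) (X 2) ∈ bigI k :=
    Ideal.subset_span (Set.mem_insert_of_mem _ rfl)
  obtain ⟨c, hc⟩ := key_inv_mem k x⁻¹ n (hXmem 1 hX1) (hXmem 2 hX2)
  intro e he
  obtain ⟨m, hm, rfl⟩ := (IsLocalization.mem_coeSubmodule _ _).mp he
  have hxc : x * algebraMap (bigD k) (bigK k) c = 1 := by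
    rw [hc]; exact mul_inv_cancel₀ hx
  have he' : algebraMap (bigD k) (bigK k) m
      = x * algebraMap (bigD k) (bigK k) (c * m) := by
    rw [_root_.map_mul, ← mul_assoc, hxc, one_mul]
  rw [he']
  exact Submodule.mul_mem_mul (Submodule.mem_span_singleton_self x)
    (hMP ((IsLocalization.mem_coeSubmodule _ _).mpr
      ⟨c * m, Ideal.mul_mem_left _ c hm, rfl⟩))

lemma hMc2' : ((bigMF k ^ 2 : FractionalIdeal (nonZeroDivisors (bigD k)) (bigK k)) :
    Submodule (bigD k) (bigK k)) = IsLocalization.coeSubmodule (bigK k) (bigM k ^ 2) := by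
  rw [bigMF, ← coeIdeal_pow, coe_coeIdeal]

lemma starJ_eq (n : ℕ) (hn : bigI k ^ n ≤ bigM k ^ 2) :
    starJ k (IsLocalization.coeSubmodule (bigK k) (bigI k ^ n))
      = IsLocalization.coeSubmodule (bigK k) (bigM k ^ 2) := by
  have hMc : (bigMF k : Submodule (bigD k) (bigK k))
      = IsLocalization.coeSubmodule (bigK k) (bigM k) := rfl
  have hMc2 : (bigMF k : Submodule (bigD k) (bigK k)) ^ 2
      = IsLocalization.coeSubmodule (bigK k) (bigM k ^ 2) := by
    rw [← FractionalIdeal.coe_pow, hMc2' k]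
  apply le_antisymm
  · apply sInf_le
    refine ⟨⟨1, one_ne_zero, Or.inr (Or.inr ?_)⟩, ?_⟩
    · rw [← Submodule.one_eq_span, one_mul, hMc2]
    · exact IsFractionRing.coeSubmodule_le_coeSubmodule.mpr hn
  · apply le_sInf
    rintro J ⟨⟨x, hx, hcase⟩, hIJ⟩
    rcases hcase with h | h | h
    · have h' := M2_le_aux k n x hx 1 le_rfl (coeSub_le_one k _)
        (by rw [mul_one]; exact h ▸ hIJ)
      rw [mul_one] at h'
      exact h ▸ h'
    · refine h ▸ M2_le_aux k n x hx _ ?_ ?_ (h ▸ hIJ)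
      · rw [hMc]; exact coeSub_le_one k _
      · rw [hMc]
        exact IsFractionRing.coeSubmodule_le_coeSubmodule.mpr (Ideal.pow_le_self two_ne_zero)
    · refine h ▸ M2_le_aux k n x hx _ ?_ ?_ (h ▸ hIJ)
      · rw [hMc2]; exact coeSub_le_one k _
      · exact le_of_eq hMc2.symm

/-- For the ideal `I = (X_1, X_2)D` of `D`, both `(I²)^∗ = M²` and `(I³)^∗ = M²`, where
`E^∗ := ⋂ {J ∈ 𝒥 : E ⊆ J}`. -/
theorem starJ_I2_I3 :
    starJ k ((((Ideal.span {algebraMap (MvPolynomial ℕ k) (bigD k) (X 1),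
            algebraMap (MvPolynomial ℕ k) (bigD k) (X 2)} : Ideal (bigD k)) ^ 2 :
              Ideal (bigD k)) :
            FractionalIdeal (nonZeroDivisors (bigD k)) (bigK k)) :
              Submodule (bigD k) (bigK k)) =
        ((bigMF k ^ 2 : FractionalIdeal (nonZeroDivisors (bigD k)) (bigK k)) :
          Submodule (bigD k) (bigK k)) ∧
    starJ k ((((Ideal.span {algebraMap (MvPolynomial ℕ k) (bigD k) (X 1),
            algebraMap (MvPolynomial ℕ k) (bigD k) (X 2)} : Ideal (bigD k)) ^ 3 :
              Ideal (bigD k)) :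
            FractionalIdeal (nonZeroDivisors (bigD k)) (bigK k)) :
              Submodule (bigD k) (bigK k)) =
        ((bigMF k ^ 2 : FractionalIdeal (nonZeroDivisors (bigD k)) (bigK k)) :
          Submodule (bigD k) (bigK k)) := by
  have hIM : bigI k ≤ bigM k := by
    rw [bigI, Ideal.span_le]
    intro y hy
    have hmem : ∀ i : ℕ, algebraMap (MvPolynomial ℕ k) (bigD k) (X i) ∈ bigM k := by
      intro i
      have hXN : (X i : MvPolynomial ℕ k) ∈ bigN k := Ideal.subset_span ⟨i, rfl⟩
      rw [bigM]
      exact (IsLocalization.AtPrime.to_map_mem_maximal_iff (bigD k) (bigN k) _).mpr hXN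
    rcases hy with rfl | hy
    · exact hmem 1
    · rw [Set.mem_singleton_iff] at hy
      exact hy ▸ hmem 2
  constructor
  · rw [hMc2' k]
    exact starJ_eq k 2 (Ideal.pow_right_mono hIM 2)
  · rw [hMc2' k]
    exact starJ_eq k 3 (le_trans (Ideal.pow_right_mono hIM 3)
      (Ideal.pow_le_pow_right (by norm_num)))
end
end

section
/- For the ideal I = (X_1, X_2)D of D and every nonzero y ∈ K, if IM ⊆ yM then I ⊆ yM. -/
open MvPolynomial FractionalIdeal

set_option maxHeartbeats 1000000
set_option synthInstance.maxHeartbeats 400000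

noncomputable section

variable (k : Type*) [Field k]

/-- The ideal `I = (X_1, X_2)D` of `D`. -/
def IXY : Ideal (bigD k) :=
  Ideal.span {algebraMap (MvPolynomial ℕ k) (bigD k) (X 1),
    algebraMap (MvPolynomial ℕ k) (bigD k) (X 2)}

def natOptionEquiv : ℕ ≃ Option ℕ where
  toFun n := match n with | 0 => none | n+1 => some n
  invFun o := match o with | none => 0 | some n => n+1
  left_inv n := by cases n <;> rfl
  right_inv o := by cases o <;> rfl

theorem prime_mvX (j : ℕ) : Prime (MvPolynomial.X j : MvPolynomial ℕ k) := by
  let e : ℕ ≃ Option ℕ := (Equiv.swap j 0).trans natOptionEquiv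
  have he : e j = none := by
    simp [e, natOptionEquiv, Equiv.swap_apply_left]
  let Φ := ((renameEquiv k e).trans (optionEquivLeft k ℕ)).toRingEquiv.toMulEquiv
  rw [← MulEquiv.prime_iff Φ]
  have hΦ : Φ (MvPolynomial.X j) = Polynomial.X := by
    show (optionEquivLeft k ℕ) ((renameEquiv k e) (MvPolynomial.X j)) = Polynomial.X
    rw [renameEquiv_apply, rename_X, he, optionEquivLeft_X_none]
  rw [hΦ]
  exact Polynomial.prime_X

theorem X_not_dvd_X {i j : ℕ} (hij : i ≠ j) :
    ¬ (MvPolynomial.X i : MvPolynomial ℕ k) ∣ MvPolynomial.X j := by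
  rintro ⟨q, hq⟩
  have := congrArg (MvPolynomial.eval (fun n => if n = i then (0:k) else 1)) hq
  simp [Ne.symm hij] at this

theorem X_mem_bigN (i : ℕ) : (MvPolynomial.X i : MvPolynomial ℕ k) ∈ bigN k :=
  Ideal.subset_span ⟨i, rfl⟩

theorem exists_prime_factor_mem :
    ∀ (a : MvPolynomial ℕ k), a ≠ 0 → a ∈ bigN k → ∃ p, Prime p ∧ p ∣ a ∧ p ∈ bigN k := by
  intro a
  induction a using UniqueFactorizationMonoid.induction_on_prime with
  | h₁ => intro h; exact absurd rfl h
  | h₂ x hx =>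
    intro _ hmem
    exact absurd ((bigN k).eq_top_of_isUnit_mem hmem hx) (Ideal.IsMaximal.ne_top inferInstance)
  | h₃ a p ha hp ih =>
    intro _ hmem
    rcases (Ideal.IsMaximal.isPrime inferInstance).mem_or_mem hmem with hmem' | hmem'
    · exact ⟨p, hp, dvd_mul_right p a, hmem'⟩
    · obtain ⟨q, hq, hqa, hqN⟩ := ih ha hmem'
      exact ⟨q, hq, hqa.mul_left p, hqN⟩

instance bigK_isFractionRing_s12 : IsFractionRing (bigD k) (bigK k) := by
  have key := @Localization.isLocalization (bigD k) _ (nonZeroDivisors (bigD k))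
  convert key using 1
  apply Algebra.algebra_ext
  intro r
  exact congrFun (congrArg DFunLike.coe (IsLocalization.ringHom_ext (bigN k).primeCompl
    (RingHom.ext fun x => by simp [RingHom.algebraMap_toAlgebra]; rfl))) r

/-- The composite map `R → D → K`. -/
def toK : MvPolynomial ℕ k →+* bigK k :=
  (algebraMap (bigD k) (bigK k)).comp (algebraMap (MvPolynomial ℕ k) (bigD k))

theorem toK_injective : Function.Injective (toK k) := by
  rw [toK, RingHom.coe_comp]
  exact (IsFractionRing.injective (bigD k) (bigK k)).comp
    (IsLocalization.injective (bigD k) (bigN k).primeCompl_le_nonZeroDivisors)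

theorem toK_X_ne_zero (i : ℕ) : toK k (MvPolynomial.X i) ≠ 0 := by
  intro h
  exact MvPolynomial.X_ne_zero i (toK_injective k (by simpa using h))

/-- Representation of an element of `D` inside `K` as a fraction over `R`. -/
theorem repD (d : bigD k) :
    ∃ (a t : MvPolynomial ℕ k), t ∉ bigN k ∧
      algebraMap (bigD k) (bigK k) d * toK k t = toK k a := by
  obtain ⟨⟨a, t⟩, rfl⟩ := IsLocalization.mk'_surjective (bigN k).primeCompl d
  refine ⟨a, t, t.2, ?_⟩
  rw [toK, RingHom.comp_apply, RingHom.comp_apply, ← _root_.map_mul, IsLocalization.mk'_spec]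

theorem mem_range_aux {f g : MvPolynomial ℕ k} (hg0 : g ≠ 0) (hgN : g ∉ bigN k)
    {z : bigK k} (hz : z * toK k g = toK k f) :
    ∃ d : bigD k, algebraMap (bigD k) (bigK k) d = z := by
  refine ⟨IsLocalization.mk' (bigD k) f (⟨g, hgN⟩ : (bigN k).primeCompl), ?_⟩
  have hgne : toK k g ≠ 0 := fun h => hg0 (toK_injective k (by simpa using h))
  apply mul_right_cancel₀ hgne
  rw [hz, toK, RingHom.comp_apply, RingHom.comp_apply, ← _root_.map_mul,
    IsLocalization.mk'_spec]

theorem not_exists_div {i j : ℕ} (hij : i ≠ j) :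
    ¬ ∃ d : bigD k, algebraMap (bigD k) (bigK k) d * toK k (MvPolynomial.X i)
        = toK k (MvPolynomial.X j) := by
  rintro ⟨d, hd⟩
  obtain ⟨a, t, htN, hat⟩ := repD k d
  have key : a * MvPolynomial.X i = MvPolynomial.X j * t := by
    apply toK_injective k
    rw [_root_.map_mul, _root_.map_mul, ← hat]
    rw [← hd]
    ring
  have hdvd : (MvPolynomial.X i : MvPolynomial ℕ k) ∣ MvPolynomial.X j * t :=
    ⟨a, by rw [← key]; ring⟩
  rcases (prime_mvX k i).2.2 _ _ hdvd with h' | h'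
  · exact X_not_dvd_X k hij h'
  · obtain ⟨u, rfl⟩ := h'
    exact htN (Ideal.mul_mem_right u _ (X_mem_bigN k i))

theorem mem_range_of {z : bigK k}
    (h1 : ∃ d : bigD k, algebraMap (bigD k) (bigK k) d = z * toK k (MvPolynomial.X 1))
    (h2 : ∃ d : bigD k, algebraMap (bigD k) (bigK k) d = z * toK k (MvPolynomial.X 2)) :
    ∃ d : bigD k, algebraMap (bigD k) (bigK k) d = z := by
  -- write z as a fraction over R
  obtain ⟨⟨r, s⟩, hrs⟩ := IsLocalization.mk'_surjective (nonZeroDivisors (bigD k)) z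
  have hs0 : (s : bigD k) ≠ 0 := nonZeroDivisors.ne_zero s.2
  have hzs : z * algebraMap (bigD k) (bigK k) s = algebraMap (bigD k) (bigK k) r := by
    rw [← hrs, IsLocalization.mk'_spec]
  obtain ⟨a1, t1, ht1N, hat1⟩ := repD k r
  obtain ⟨a2, t2, ht2N, hat2⟩ := repD k s
  have tK_ne : ∀ t : MvPolynomial ℕ k, t ≠ 0 → toK k t ≠ 0 := by
    intro t ht0 h
    exact ht0 (toK_injective k (by simpa using h))
  have hnot0 : ∀ t : MvPolynomial ℕ k, t ∉ bigN k → t ≠ 0 := by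
    intro t htN h
    exact htN (h ▸ (bigN k).zero_mem)
  have hginj : Function.Injective (algebraMap (bigD k) (bigK k)) :=
    IsFractionRing.injective (bigD k) (bigK k)
  have ha2 : a2 ≠ 0 := by
    rintro rfl
    have h0 : (algebraMap (bigD k) (bigK k)) (s : bigD k) * toK k t2 = 0 := by
      rw [hat2, _root_.map_zero]
    rcases mul_eq_zero.mp h0 with h' | h'
    · exact hs0 (hginj (by rw [h', _root_.map_zero]))
    · exact tK_ne t2 (hnot0 t2 ht2N) h'
  have hmain : z * toK k (a2 * t1) = toK k (a1 * t2) := by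
    rw [_root_.map_mul, _root_.map_mul, ← hat1, ← hat2, ← hzs]
    ring
  have hG0 : a2 * t1 ≠ 0 := mul_ne_zero ha2 (hnot0 t1 ht1N)
  obtain ⟨F, G, c, hrel, hcF, hcG⟩ :=
    UniqueFactorizationMonoid.exists_reduced_factors' (a1 * t2) (a2 * t1) hG0
  have hc0 : c ≠ 0 := fun h => hG0 (by rw [← hcG, h, zero_mul])
  have hG0' : G ≠ 0 := fun h => hG0 (by rw [← hcG, h, mul_zero])
  have hred : z * toK k G = toK k F := by
    apply mul_left_cancel₀ (tK_ne c hc0)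
    rw [← mul_assoc, mul_comm (toK k c) z, mul_assoc, ← _root_.map_mul, ← _root_.map_mul,
      hcF, hcG, hmain]
  have hGN : G ∉ bigN k := by
    intro hGN
    obtain ⟨p, hp, hpG, hpN⟩ := exists_prime_factor_mem k G hG0' hGN
    have key : ∀ i : ℕ,
        (∃ d : bigD k, algebraMap (bigD k) (bigK k) d = z * toK k (MvPolynomial.X i)) →
        p ∣ MvPolynomial.X i := by
      rintro i ⟨d, hd⟩
      obtain ⟨b, t, htN, hbt⟩ := repD k d
      have heq : F * (MvPolynomial.X i * t) = G * b := by
        apply toK_injective k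
        rw [_root_.map_mul, _root_.map_mul, _root_.map_mul, ← hbt, hd, ← hred]
        ring
      have hpdvd : p ∣ F * (MvPolynomial.X i * t) := heq ▸ hpG.mul_right b
      rcases hp.2.2 _ _ hpdvd with h' | h'
      · exact absurd (hrel h' hpG) hp.not_unit
      · rcases hp.2.2 _ _ h' with h'' | h''
        · exact h''
        · exfalso
          obtain ⟨u, rfl⟩ := h''
          exact htN (Ideal.mul_mem_right u _ hpN)
    have hd1 : Associated p (MvPolynomial.X 1 : MvPolynomial ℕ k) :=
      hp.associated_of_dvd (prime_mvX k 1) (key 1 h1)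
    have hd2 : Associated p (MvPolynomial.X 2 : MvPolynomial ℕ k) :=
      hp.associated_of_dvd (prime_mvX k 2) (key 2 h2)
    exact X_not_dvd_X k (by norm_num) ((hd1.symm.trans hd2).dvd)
  exact mem_range_aux k hG0' hGN hred

/-- For `I = (X_1, X_2)D` and every nonzero `y ∈ K`: if `IM ⊆ yM` then `I ⊆ yM`. -/
theorem I_le_of_IM_le (y : bigK k) (hy : y ≠ 0)
    (h : (((IXY k * bigM k : Ideal (bigD k)) :
          FractionalIdeal (nonZeroDivisors (bigD k)) (bigK k)) :
            @Submodule (bigD k) (bigK k) _ _ Algebra.toModule) ≤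
        @Submodule.span (bigD k) (bigK k) _ _ Algebra.toModule {y} * (bigMF k : @Submodule (bigD k) (bigK k) _ _ Algebra.toModule)) :
    (((IXY k : Ideal (bigD k)) : FractionalIdeal (nonZeroDivisors (bigD k)) (bigK k)) :
        @Submodule (bigD k) (bigK k) _ _ Algebra.toModule) ≤
      @Submodule.span (bigD k) (bigK k) _ _ Algebra.toModule {y} * (bigMF k : @Submodule (bigD k) (bigK k) _ _ Algebra.toModule) := by
  classical
  set g := algebraMap (bigD k) (bigK k) with hg
  set φ := algebraMap (MvPolynomial ℕ k) (bigD k) with hφ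
  have hginj : Function.Injective g := IsFractionRing.injective (bigD k) (bigK k)
  -- basic memberships
  have hX1I : φ (X 1) ∈ IXY k := Ideal.subset_span (by left; rfl)
  have hX2I : φ (X 2) ∈ IXY k := Ideal.subset_span (by right; rfl)
  have hXM : ∀ i : ℕ, φ (X i) ∈ bigM k := by
    intro i
    rw [bigM, ← Localization.AtPrime.map_eq_maximalIdeal]
    exact Ideal.mem_map_of_mem _ (X_mem_bigN k i)
  have hgφ : ∀ a : MvPolynomial ℕ k, g (φ a) = toK k a := fun a => rfl
  -- extract elements from the hypothesis
  have key : ∀ a ∈ IXY k * bigM k, ∃ m ∈ bigM k, g a = y * g m := by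
    intro a ha
    have hmem := h (FractionalIdeal.mem_coe.mpr
      ((FractionalIdeal.mem_coeIdeal _).mpr ⟨a, ha, rfl⟩))
    rw [Submodule.mem_span_singleton_mul] at hmem
    obtain ⟨s, hs, hys⟩ := hmem
    rw [bigMF] at hs
    obtain ⟨m, hm, rfl⟩ := (FractionalIdeal.mem_coeIdeal _).mp (FractionalIdeal.mem_coe.mp hs)
    exact ⟨m, hm, hys.symm⟩
  obtain ⟨m11, hm11, e11⟩ := key _ (Ideal.mul_mem_mul hX1I (hXM 1))
  obtain ⟨m12, hm12, e12⟩ := key _ (Ideal.mul_mem_mul hX1I (hXM 2))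
  obtain ⟨m21, hm21, e21⟩ := key _ (Ideal.mul_mem_mul hX2I (hXM 1))
  obtain ⟨m22, hm22, e22⟩ := key _ (Ideal.mul_mem_mul hX2I (hXM 2))
  simp only [_root_.map_mul, hgφ] at e11 e12 e21 e22
  -- z = X1/y and w = X2/y are in D
  have hz : ∃ d : bigD k, g d = (toK k (X 1) * y⁻¹) := by
    apply mem_range_of k
    · exact ⟨m11, by field_simp; linear_combination -e11⟩
    · exact ⟨m12, by field_simp; linear_combination -e12⟩
  have hw : ∃ d : bigD k, g d = (toK k (X 2) * y⁻¹) := by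
    apply mem_range_of k
    · exact ⟨m21, by field_simp; linear_combination -e21⟩
    · exact ⟨m22, by field_simp; linear_combination -e22⟩
  obtain ⟨z', hz'⟩ := hz
  obtain ⟨w', hw'⟩ := hw
  have hX1y : toK k (X 1) = y * g z' := by rw [hz']; field_simp
  have hX2y : toK k (X 2) = y * g w' := by rw [hw']; field_simp
  have hX1ne : toK k (X 1) ≠ 0 := toK_X_ne_zero k 1
  have hX2ne : toK k (X 2) ≠ 0 := toK_X_ne_zero k 2
  -- z' and w' are in M
  have hz'M : z' ∈ bigM k := by
    by_contra hz'M
    have hu : IsUnit z' := by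
      rw [bigM, IsLocalRing.mem_maximalIdeal, mem_nonunits_iff, not_not] at hz'M
      exact hz'M
    obtain ⟨u, hu⟩ := hu
    refine not_exists_div k (i := 1) (j := 2) (by norm_num) ⟨w' * ↑u⁻¹, ?_⟩
    have huu : g z' * g ↑u⁻¹ = 1 := by
      rw [← _root_.map_mul, ← hu, Units.mul_inv, _root_.map_one]
    have hgz : g z' ≠ 0 := fun h0 => by
      rw [h0, zero_mul] at huu; exact zero_ne_one huu
    apply mul_left_cancel₀ hgz
    rw [_root_.map_mul]
    calc g z' * (g w' * g ↑u⁻¹ * toK k (X 1))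
        = (g z' * g ↑u⁻¹) * (g w' * toK k (X 1)) := by ring
      _ = g w' * toK k (X 1) := by rw [huu, one_mul]
      _ = g z' * toK k (X 2) := by rw [hz', hw']; ring
  have hw'M : w' ∈ bigM k := by
    by_contra hw'M
    have hu : IsUnit w' := by
      rw [bigM, IsLocalRing.mem_maximalIdeal, mem_nonunits_iff, not_not] at hw'M
      exact hw'M
    obtain ⟨u, hu⟩ := hu
    refine not_exists_div k (i := 2) (j := 1) (by norm_num) ⟨z' * ↑u⁻¹, ?_⟩
    have huu : g w' * g ↑u⁻¹ = 1 := by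
      rw [← _root_.map_mul, ← hu, Units.mul_inv, _root_.map_one]
    have hgw : g w' ≠ 0 := fun h0 => by
      rw [h0, zero_mul] at huu; exact zero_ne_one huu
    apply mul_left_cancel₀ hgw
    rw [_root_.map_mul]
    calc g w' * (g z' * g ↑u⁻¹ * toK k (X 2))
        = (g w' * g ↑u⁻¹) * (g z' * toK k (X 2)) := by ring
      _ = g z' * toK k (X 2) := by rw [huu, one_mul]
      _ = g w' * toK k (X 1) := by rw [hz', hw']; ring
  -- conclude
  intro x hx
  obtain ⟨a, haI, rfl⟩ := (FractionalIdeal.mem_coeIdeal _).mp (FractionalIdeal.mem_coe.mp hx)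
  obtain ⟨c1, c2, hc⟩ := Ideal.mem_span_pair.mp haI
  rw [Submodule.mem_span_singleton_mul]
  refine ⟨g (c1 * z' + c2 * w'), ?_, ?_⟩
  · apply FractionalIdeal.mem_coe.mpr
    rw [bigMF]
    exact (FractionalIdeal.mem_coeIdeal _).mpr
      ⟨c1 * z' + c2 * w',
        (bigM k).add_mem ((bigM k).mul_mem_left c1 hz'M) ((bigM k).mul_mem_left c2 hw'M), rfl⟩
  · rw [← hc]
    simp only [_root_.map_add, _root_.map_mul, ← hg, ← hφ, hgφ, hX1y, hX2y]
    ring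
end
end
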